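/- Let E ∈ ℂ^{n×n}, B ∈ ℂ^{n×m}, C ∈ ℂ^{p×n}, and let r be a nonnegative integer. There exists G0 ∈ ℂ^{m×p} such that rank(E + B G0 C) = r if and only if rank([E, B]) + rank([E; C]) − rank([[E, B],[C, 0]]) ≤ r ≤ min{rank([E, B]), rank([E; C])}. -/

import Mathlib

open Matrix

set_option linter.unusedSectionVars false
set_option maxHeartbeats 1000000

open LinearMap Submodule Module


open LinearMap Submodule Module

variable {K V W : Type*} [Field K] [AddCommGroup V] [Module K V] [FiniteDimensional K V]
  [AddCommGroup W] [Module K W] [FiniteDimensional K W]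

/-- rank-nullity on a submodule -/
lemma finrank_eq_map_add_inf_ker (u : V →ₗ[K] W) (p : Submodule K V) :
    finrank K p = finrank K (p.map u) + finrank K (p ⊓ ker u : Submodule K V) := by
  have h := LinearMap.finrank_range_add_finrank_ker (u.domRestrict p)
  rw [LinearMap.range_domRestrict] at h
  have h2 : finrank K (ker (u.domRestrict p)) = finrank K (p ⊓ ker u : Submodule K V) := by
    rw [LinearMap.ker_domRestrict]
    rw [(Submodule.equivMapOfInjective p.subtype (Submodule.injective_subtype p) _).finrank_eq,
      Submodule.map_comap_subtype]
  omega

/-- existence of a functional vanishing on U with value 1 at x ∉ U -/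
lemma exists_dual_one (U : Submodule K V) {x : V} (hx : x ∉ U) :
    ∃ lam : V →ₗ[K] K, U ≤ ker lam ∧ lam x = 1 := by
  set q := U.mkQ
  have hqx : q x ≠ 0 := by
    simpa [q, Submodule.Quotient.mk_eq_zero] using hx
  obtain ⟨Z, hZ⟩ := Submodule.exists_isCompl (K ∙ q x)
  set pr := Submodule.linearProjOfIsCompl _ _ hZ
  set e := (LinearEquiv.toSpanNonzeroSingleton K _ (q x) hqx).symm
  refine ⟨(e : (K ∙ q x) →ₗ[K] K) ∘ₗ pr ∘ₗ q, ?_, ?_⟩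
  · intro u hu
    have hq : q u = 0 := (Submodule.Quotient.mk_eq_zero U).2 hu
    rw [LinearMap.mem_ker, LinearMap.comp_apply, LinearMap.comp_apply, hq,
      _root_.map_zero, _root_.map_zero]
  · have h1 : pr (q x) = ⟨q x, Submodule.mem_span_singleton_self _⟩ :=
      Submodule.linearProjOfIsCompl_apply_left hZ ⟨q x, Submodule.mem_span_singleton_self _⟩
    simp only [LinearMap.comp_apply, h1]
    have : (⟨q x, Submodule.mem_span_singleton_self _⟩ : K ∙ q x)
        = LinearEquiv.toSpanNonzeroSingleton K _ (q x) hqx 1 := by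
      ext
      simp [LinearEquiv.toSpanNonzeroSingleton]
    rw [this]
    exact (LinearEquiv.toSpanNonzeroSingleton K _ (q x) hqx).symm_apply_apply 1

section core2

variable (f h : V →ₗ[K] V) (BB CC : Submodule K V)

lemma sup_eq_of_adm (h1 : range h ≤ BB) : range (f + h) ⊔ BB = range f ⊔ BB := by
  apply le_antisymm
  · refine sup_le ?_ le_sup_right
    rintro _ ⟨x, rfl⟩
    exact Submodule.add_mem _ (Submodule.mem_sup_left ⟨x, rfl⟩)
      (Submodule.mem_sup_right (h1 ⟨x, rfl⟩))
  · refine sup_le ?_ le_sup_right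
    rintro _ ⟨x, rfl⟩
    have : f x = (f + h) x - h x := by simp
    rw [this]
    exact Submodule.sub_mem _ (Submodule.mem_sup_left ⟨x, rfl⟩)
      (Submodule.mem_sup_right (h1 ⟨x, rfl⟩))

lemma ker_inf_eq_of_adm (h2 : CC ≤ ker h) : ker (f + h) ⊓ CC = ker f ⊓ CC := by
  ext x
  simp only [Submodule.mem_inf, LinearMap.mem_ker, LinearMap.add_apply]
  constructor
  · rintro ⟨hk, hc⟩
    have := h2 hc
    rw [LinearMap.mem_ker] at this
    exact ⟨by rw [this, add_zero] at hk; exact hk, hc⟩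
  · rintro ⟨hk, hc⟩
    have := h2 hc
    rw [LinearMap.mem_ker] at this
    exact ⟨by rw [hk, this, add_zero], hc⟩

lemma comap_inf_eq_of_adm (h2 : CC ≤ ker h) : CC ⊓ comap (f + h) BB = CC ⊓ comap f BB := by
  ext x
  simp only [Submodule.mem_inf, Submodule.mem_comap, LinearMap.add_apply]
  constructor
  · rintro ⟨hc, hb⟩
    have := h2 hc; rw [LinearMap.mem_ker] at this
    rw [this, add_zero] at hb; exact ⟨hc, hb⟩
  · rintro ⟨hc, hb⟩
    have := h2 hc; rw [LinearMap.mem_ker] at this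
    rw [this, add_zero]; exact ⟨hc, hb⟩

/-- Necessity, in A-form (for the map A itself, with its own subspace data). -/
lemma necessity_A (A : V →ₗ[K] V) :
    finrank K (range A) ≤ finrank K (range A ⊔ BB : Submodule K V) ∧
    finrank K (range A) + finrank K (ker A ⊓ CC : Submodule K V) ≤ finrank K V ∧
    finrank K (range A ⊔ BB : Submodule K V) + finrank K (CC ⊓ comap A BB : Submodule K V) ≤
      finrank K (range A) + finrank K BB + finrank K (ker A ⊓ CC : Submodule K V) := by
  refine ⟨Submodule.finrank_mono le_sup_left, ?_, ?_⟩
  · have h1 := LinearMap.finrank_range_add_finrank_ker A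
    have h2 : finrank K (ker A ⊓ CC : Submodule K V) ≤ finrank K (ker A) :=
      Submodule.finrank_mono inf_le_left
    omega
  · have hsup := Submodule.finrank_sup_add_finrank_inf_eq (range A) BB
    have hrn := finrank_eq_map_add_inf_ker A (CC ⊓ comap A BB)
    have hmap : finrank K ((CC ⊓ comap A BB).map A) ≤ finrank K (range A ⊓ BB : Submodule K V) := by
      apply Submodule.finrank_mono
      rintro _ ⟨x, hx, rfl⟩
      exact ⟨⟨x, rfl⟩, hx.2⟩
    have hker : finrank K (CC ⊓ comap A BB ⊓ ker A : Submodule K V) ≤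
        finrank K (ker A ⊓ CC : Submodule K V) := by
      apply Submodule.finrank_mono
      rintro x ⟨⟨hc, _⟩, hk⟩
      exact ⟨hk, hc⟩
    omega


lemma finrank_ker_dual {lam : V →ₗ[K] K} {x : V} (hx : lam x = 1) :
    finrank K (ker lam) + 1 = finrank K V := by
  have h1 := LinearMap.finrank_range_add_finrank_ker lam
  have h2 : range lam = ⊤ := by
    rw [LinearMap.range_eq_top]
    intro c
    exact ⟨c • x, by simp [hx]⟩
  rw [h2, finrank_top] at h1
  rw [finrank_self] at h1
  omega

lemma finrank_span_singleton_le' (z : V) : finrank K (K ∙ z) ≤ 1 := by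
  by_cases hz : z = 0
  · rw [hz, Submodule.span_zero_singleton]
    simp
  · rw [finrank_span_singleton hz]

lemma range_add_le' (X Y : V →ₗ[K] V) : range (X + Y) ≤ range X ⊔ range Y := by
  rintro _ ⟨v, rfl⟩
  exact Submodule.add_mem _ (Submodule.mem_sup_left ⟨v, rfl⟩) (Submodule.mem_sup_right ⟨v, rfl⟩)

lemma finrank_sup_le' (U U' : Submodule K V) :
    finrank K (U ⊔ U' : Submodule K V) ≤ finrank K U + finrank K U' := by
  have := Submodule.finrank_sup_add_finrank_inf_eq U U'
  omega


variable {BB CC : Submodule K V}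

/-- climbing up by a rank-one admissible perturbation -/
lemma step_up (A : V →ₗ[K] V)
    (hP : finrank K (range A) < finrank K (range A ⊔ BB : Submodule K V))
    (hQ : finrank K (range A) + finrank K (ker A ⊓ CC : Submodule K V) < finrank K V) :
    ∃ δ : V →ₗ[K] V, range δ ≤ BB ∧ CC ≤ ker δ ∧
      finrank K (range (A + δ)) = finrank K (range A) + 1 := by
  set s := finrank K (range A) with hs
  -- w ∈ BB \ range A
  obtain ⟨w, hwB, hwA⟩ : ∃ w ∈ BB, w ∉ range A := by
    rw [← SetLike.not_le_iff_exists]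
    intro hle
    rw [sup_of_le_left hle] at hP
    omega
  -- x ∈ ker A \ CC
  obtain ⟨x, hxk, hxC⟩ : ∃ x ∈ ker A, x ∉ CC := by
    rw [← SetLike.not_le_iff_exists]
    intro hle
    rw [inf_of_le_left hle] at hQ
    have := LinearMap.finrank_range_add_finrank_ker A
    omega
  obtain ⟨lam, hlamC, hlamx⟩ := exists_dual_one CC hxC
  refine ⟨lam.smulRight w, ?_, ?_, ?_⟩
  · rintro _ ⟨v, rfl⟩
    exact BB.smul_mem _ hwB
  · intro v hv
    have : lam v = 0 := hlamC hv
    simp [LinearMap.mem_ker, this]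
  · have hw0 : w ≠ 0 := fun h => hwA (h ▸ (range A).zero_mem)
    apply le_antisymm
    · -- ≤ s + 1
      have hle : range (A + lam.smulRight w) ≤ range A ⊔ (K ∙ w) := by
        rintro _ ⟨v, rfl⟩
        exact Submodule.add_mem _ (Submodule.mem_sup_left ⟨v, rfl⟩)
          (Submodule.mem_sup_right (Submodule.smul_mem _ _ (Submodule.mem_span_singleton_self w)))
      calc finrank K (range (A + lam.smulRight w)) ≤
          finrank K (range A ⊔ (K ∙ w) : Submodule K V) := Submodule.finrank_mono hle
        _ ≤ s + finrank K (K ∙ w) := finrank_sup_le' _ _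
        _ ≤ s + 1 := by have := finrank_span_singleton_le' (K := K) w; omega
    · -- ≥ s + 1
      have hsub : map A (ker lam) ⊔ (K ∙ w) ≤ range (A + lam.smulRight w) := by
        apply sup_le
        · rintro _ ⟨v, hv, rfl⟩
          have hv0 : lam v = 0 := by simpa using hv
          exact ⟨v, by simp [hv0]⟩
        · rw [Submodule.span_le, Set.singleton_subset_iff]
          refine ⟨x, ?_⟩
          rw [LinearMap.mem_ker] at hxk
          simp [hxk, hlamx]
      have hwnotin : w ∉ map A (ker lam) := by
        intro hw
        obtain ⟨v, -, rfl⟩ := hw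
        exact hwA ⟨v, rfl⟩
      have hlt : map A (ker lam) < map A (ker lam) ⊔ (K ∙ w) := by
        refine lt_of_le_of_ne le_sup_left ?_
        intro hEq
        exact hwnotin (hEq ▸ Submodule.mem_sup_right (Submodule.mem_span_singleton_self w))
      have h1 : finrank K (map A (ker lam)) < finrank K (map A (ker lam) ⊔ (K ∙ w) : Submodule K V) :=
        Submodule.finrank_lt_finrank_of_lt hlt
      have h2 : finrank K (map A (ker lam) ⊔ (K ∙ w) : Submodule K V) ≤
          finrank K (range (A + lam.smulRight w)) := Submodule.finrank_mono hsub
      -- finrank map A (ker lam) ≥ s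
      have h3 := finrank_eq_map_add_inf_ker A (ker lam)
      have h4 : finrank K (ker lam) + 1 = finrank K V := finrank_ker_dual hlamx
      have h5 : finrank K (ker lam ⊓ ker A : Submodule K V) < finrank K (ker A) := by
        apply Submodule.finrank_lt_finrank_of_lt
        refine lt_of_le_of_ne inf_le_right ?_
        intro hEq
        have hx2 : x ∈ ker lam ⊓ ker A := by rw [hEq]; exact hxk
        have : lam x = 0 := hx2.1
        rw [hlamx] at this
        exact one_ne_zero this
      have h6 := LinearMap.finrank_range_add_finrank_ker A
      omega

/-- climbing down by a rank-one admissible perturbation -/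
lemma step_down (A : V →ₗ[K] V)
    (hlt : finrank K (CC ⊓ comap A BB : Submodule K V) <
      finrank K (ker A ⊓ CC : Submodule K V) + finrank K (range A ⊓ BB : Submodule K V)) :
    ∃ δ : V →ₗ[K] V, range δ ≤ BB ∧ CC ≤ ker δ ∧
      finrank K (range (A + δ)) + 1 = finrank K (range A) := by
  set s := finrank K (range A) with hs
  have hkc : ker A ≤ comap A BB := fun x hx => by
    rw [LinearMap.mem_ker] at hx
    simp [Submodule.mem_comap, hx]
  -- find x₀
  obtain ⟨x₀, hx₀m, hx₀n⟩ : ∃ x₀ ∈ comap A BB, x₀ ∉ CC ⊔ ker A := by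
    rw [← SetLike.not_le_iff_exists]
    intro hle
    -- derive contradiction with hlt
    have heq : comap A BB = ker A ⊔ (CC ⊓ comap A BB) := by
      apply le_antisymm
      · intro y hy
        have : y ∈ (ker A ⊔ CC) ⊓ comap A BB := ⟨(sup_comm CC (ker A)) ▸ hle hy, hy⟩
        rwa [sup_inf_assoc_of_le _ hkc] at this
      · exact sup_le hkc inf_le_right
    have hd1 : finrank K (comap A BB) =
        finrank K (ker A) + finrank K (CC ⊓ comap A BB : Submodule K V) -
          finrank K (ker A ⊓ (CC ⊓ comap A BB) : Submodule K V) := by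
      have := Submodule.finrank_sup_add_finrank_inf_eq (ker A) (CC ⊓ comap A BB)
      rw [← heq] at this
      omega
    have hint : ker A ⊓ (CC ⊓ comap A BB) = ker A ⊓ CC := by
      apply le_antisymm
      · exact le_inf inf_le_left (inf_le_right.trans inf_le_left)
      · exact le_inf inf_le_left (le_inf inf_le_right (inf_le_left.trans hkc))
    have hd2 : finrank K (comap A BB) =
        finrank K (range A ⊓ BB : Submodule K V) + finrank K (ker A) := by
      have h := finrank_eq_map_add_inf_ker A (comap A BB)
      rw [Submodule.map_comap_eq, inf_of_le_right hkc] at h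
      omega
    rw [hint] at hd1
    have hle2 : finrank K (ker A ⊓ CC : Submodule K V) ≤ finrank K (ker A) := by
      exact Submodule.finrank_mono inf_le_left
    omega
  have hx₀C : x₀ ∉ CC ⊔ ker A := hx₀n
  obtain ⟨lam, hlamU, hlamx⟩ := exists_dual_one (CC ⊔ ker A) hx₀n
  have hAx₀ : A x₀ ∈ BB := hx₀m
  refine ⟨-(lam.smulRight (A x₀)), ?_, ?_, ?_⟩
  · rintro _ ⟨v, rfl⟩
    simp only [LinearMap.neg_apply, LinearMap.smulRight_apply]
    exact BB.neg_mem (BB.smul_mem _ hAx₀)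
  · intro v hv
    have : lam v = 0 := hlamU (Submodule.mem_sup_left hv)
    simp [LinearMap.mem_ker, this]
  · have hkerlam : ker A ≤ ker lam := (le_sup_right.trans hlamU)
    have hfk : finrank K (ker lam) + 1 = finrank K V := finrank_ker_dual hlamx
    have hub : finrank K (range (A + -(lam.smulRight (A x₀)))) + 1 ≤ s := by
      have hle : range (A + -(lam.smulRight (A x₀))) ≤ map A (ker lam) := by
        rintro _ ⟨v, rfl⟩
        refine ⟨v - lam v • x₀, ?_, ?_⟩
        · simp [SetLike.mem_coe, LinearMap.mem_ker, _root_.map_sub, _root_.map_smul, hlamx]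
        · simp [_root_.map_sub, _root_.map_smul, sub_eq_add_neg]
      have h1 : finrank K (range (A + -(lam.smulRight (A x₀)))) ≤ finrank K (map A (ker lam)) :=
        Submodule.finrank_mono hle
      have h2 := finrank_eq_map_add_inf_ker A (ker lam)
      rw [inf_of_le_right hkerlam] at h2
      have h3 := LinearMap.finrank_range_add_finrank_ker A
      omega
    have hlb : s ≤ finrank K (range (A + -(lam.smulRight (A x₀)))) + 1 := by
      have : A = (A + -(lam.smulRight (A x₀))) + lam.smulRight (A x₀) :=
        (neg_add_cancel_right A _).symm
      have h1 : range A ≤ range (A + -(lam.smulRight (A x₀))) ⊔ range (lam.smulRight (A x₀)) := by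
        nth_rewrite 1 [this]
        exact range_add_le' _ _
      have h2 : range (lam.smulRight (A x₀)) ≤ K ∙ (A x₀) := by
        rintro _ ⟨v, rfl⟩
        exact Submodule.smul_mem _ _ (Submodule.mem_span_singleton_self _)
      calc s ≤ finrank K (range (A + -(lam.smulRight (A x₀))) ⊔ range (lam.smulRight (A x₀)) : Submodule K V) :=
          Submodule.finrank_mono h1
        _ ≤ finrank K (range (A + -(lam.smulRight (A x₀)))) + finrank K (range (lam.smulRight (A x₀))) :=
          finrank_sup_le' _ _
        _ ≤ _ := by
          have h3 : finrank K (range (lam.smulRight (A x₀))) ≤ 1 :=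
            (Submodule.finrank_mono h2).trans (finrank_span_singleton_le' _)
          omega
    omega


end core2
section glue
variable {K V : Type*} [Field K] [AddCommGroup V] [Module K V] [FiniteDimensional K V]
variable (f : V →ₗ[K] V) (BB CC : Submodule K V)

/-- the abstract core theorem -/
theorem core_iff (r : ℕ) :
    (∃ h : V →ₗ[K] V, range h ≤ BB ∧ CC ≤ ker h ∧ finrank K (range (f + h)) = r) ↔
    (finrank K (range f ⊔ BB : Submodule K V) + finrank K (CC ⊓ comap f BB : Submodule K V) ≤
        r + finrank K BB + finrank K (ker f ⊓ CC : Submodule K V) ∧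
      r ≤ finrank K (range f ⊔ BB : Submodule K V) ∧
      r + finrank K (ker f ⊓ CC : Submodule K V) ≤ finrank K V) := by
  set P := finrank K (range f ⊔ BB : Submodule K V) with hPdef
  set t := finrank K (CC ⊓ comap f BB : Submodule K V) with htdef
  set k := finrank K (ker f ⊓ CC : Submodule K V) with hkdef
  set β := finrank K BB with hβdef
  set N := finrank K V with hNdef
  have transfer : ∀ h : V →ₗ[K] V, range h ≤ BB → CC ≤ ker h →
      finrank K (range (f + h) ⊔ BB : Submodule K V) = P ∧
      finrank K (ker (f + h) ⊓ CC : Submodule K V) = k ∧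
      finrank K (CC ⊓ comap (f + h) BB : Submodule K V) = t := by
    intro h h1 h2
    refine ⟨by rw [sup_eq_of_adm f h BB h1], by rw [ker_inf_eq_of_adm f h CC h2],
      by rw [comap_inf_eq_of_adm f h BB CC h2]⟩
  constructor
  · rintro ⟨h, h1, h2, rfl⟩
    obtain ⟨e1, e2, e3⟩ := transfer h h1 h2
    obtain ⟨n1, n2, n3⟩ := necessity_A BB CC (f + h)
    rw [e1] at n1 n3
    rw [e2] at n2 n3
    rw [e3] at n3
    exact ⟨by omega, n1, n2⟩
  · rintro ⟨hlo, hhi1, hhi2⟩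
    set Ach : ℕ → Prop := fun s =>
      ∃ h : V →ₗ[K] V, range h ≤ BB ∧ CC ≤ ker h ∧ finrank K (range (f + h)) = s with hAch
    show Ach r
    have step1 : ∀ s, Ach s → s < P → s + k < N → Ach (s + 1) := by
      rintro s ⟨h, h1, h2, hs⟩ hsP hsN
      obtain ⟨e1, e2, e3⟩ := transfer h h1 h2
      obtain ⟨δ, d1, d2, d3⟩ := step_up (BB := BB) (CC := CC) (f + h)
        (by rw [hs, e1]; exact hsP) (by rw [hs, e2]; exact hsN)
      refine ⟨h + δ, ?_, ?_, ?_⟩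
      · exact (range_add_le' h δ).trans (sup_le h1 d1)
      · intro v hv
        simp [LinearMap.mem_ker, LinearMap.mem_ker.mp (h2 hv), LinearMap.mem_ker.mp (d2 hv)]
      · rw [← add_assoc, d3, hs]
    have step2 : ∀ s, Ach (s + 1) → P + t < s + 1 + β + k → Ach s := by
      rintro s ⟨h, h1, h2, hs⟩ hstrict
      obtain ⟨e1, e2, e3⟩ := transfer h h1 h2
      have hsup := Submodule.finrank_sup_add_finrank_inf_eq (range (f + h)) BB
      rw [e1, hs] at hsup
      -- hypothesis for step_down: t < k + finrank (range (f+h) ⊓ BB)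
      obtain ⟨δ, d1, d2, d3⟩ := step_down (BB := BB) (CC := CC) (f + h)
        (by rw [e2, e3]; omega)
      refine ⟨h + δ, ?_, ?_, ?_⟩
      · exact (range_add_le' h δ).trans (sup_le h1 d1)
      · intro v hv
        simp [LinearMap.mem_ker, LinearMap.mem_ker.mp (h2 hv), LinearMap.mem_ker.mp (d2 hv)]
      · rw [← add_assoc]
        omega
    have up_many : ∀ d s, Ach s → s + d ≤ P → s + d + k ≤ N → Ach (s + d) := by
      intro d
      induction d with
      | zero => intro s hA _ _; simpa using hA
      | succ d ih =>
        intro s hA h1 h2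
        have hAd : Ach (s + d) := ih s hA (by omega) (by omega)
        have := step1 (s + d) hAd (by omega) (by omega)
        simpa [add_assoc] using this
    have down_many : ∀ d s, Ach (s + d) → P + t ≤ s + β + k → Ach s := by
      intro d
      induction d with
      | zero => intro s hA _; simpa using hA
      | succ d ih =>
        intro s hA hbound
        have : Ach (s + d) := by
          apply step2 (s + d)
          · have e : s + (d + 1) = s + d + 1 := by omega
            exact e ▸ hA
          · omega
        exact ih s this hbound
    have hach0 : Ach (finrank K (range f)) := ⟨0, by simp, by simp, by rw [add_zero]⟩
    obtain ⟨m1, m2, m3⟩ := necessity_A BB CC f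
    rw [← hPdef] at m1 m3
    rw [← hkdef] at m2 m3
    rw [← htdef] at m3
    rw [← hβdef] at m3
    rw [← hNdef] at m2
    by_cases hcmp : finrank K (range f) ≤ r
    · have := up_many (r - finrank K (range f)) (finrank K (range f)) hach0 (by omega) (by omega)
      have e : finrank K (range f) + (r - finrank K (range f)) = r := by omega
      rwa [e] at this
    · have := down_many (finrank K (range f) - r) r (by
        have : r + (finrank K (range f) - r) = finrank K (range f) := by omega
        rw [this]; exact hach0) (by omega)
      exact this
end glue
section ginv
variable {K V₁ V₂ V₃ : Type*} [Field K] [AddCommGroup V₁] [Module K V₁] [FiniteDimensional K V₁]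
  [AddCommGroup V₂] [Module K V₂] [FiniteDimensional K V₂]
  [AddCommGroup V₃] [Module K V₃] [FiniteDimensional K V₃]

lemma exists_ginv (u : V₁ →ₗ[K] V₂) : ∃ v : V₂ →ₗ[K] V₁, ∀ x, u (v (u x)) = u x := by
  obtain ⟨W, hW⟩ := Submodule.exists_isCompl (range u)
  set pr : V₂ →ₗ[K] range u := Submodule.linearProjOfIsCompl _ _ hW
  obtain ⟨σ, hσ⟩ := u.rangeRestrict.exists_rightInverse_of_surjective
    (LinearMap.range_eq_top.2 u.surjective_rangeRestrict)
  refine ⟨σ ∘ₗ (pr : V₂ →ₗ[K] range u), fun x => ?_⟩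
  have h1 : pr (u x) = u.rangeRestrict x :=
    Submodule.linearProjOfIsCompl_apply_left hW (u.rangeRestrict x)
  have h2 : ∀ y : range u, u (σ y) = (y : V₂) := by
    intro y
    have := congrArg (Subtype.val) (LinearMap.congr_fun hσ y)
    simpa using this
  simp only [LinearMap.comp_apply, h1, h2]
  rfl

lemma factor_through (b : V₂ →ₗ[K] V₁) (c : V₁ →ₗ[K] V₃) (h : V₁ →ₗ[K] V₁)
    (h1 : range h ≤ range b) (h2 : ker c ≤ ker h) :
    ∃ g : V₃ →ₗ[K] V₂, b ∘ₗ g ∘ₗ c = h := by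
  obtain ⟨b', hb⟩ := exists_ginv b
  obtain ⟨c', hc⟩ := exists_ginv c
  refine ⟨b' ∘ₗ h ∘ₗ c', ?_⟩
  ext x
  have e1 : h (c' (c x)) = h x := by
    have : c (c' (c x) - x) = 0 := by
      simp [_root_.map_sub, hc x]
    have hk : c' (c x) - x ∈ ker h := h2 this
    rw [LinearMap.mem_ker, _root_.map_sub, sub_eq_zero] at hk
    exact hk
  obtain ⟨y, hy⟩ : h x ∈ range b := h1 ⟨x, rfl⟩
  simp only [LinearMap.comp_apply, e1, ← hy, hb y]
end ginv

section bridge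
open Matrix
variable {n m p : ℕ} (E : Matrix (Fin n) (Fin n) ℂ) (B : Matrix (Fin n) (Fin m) ℂ)
  (C : Matrix (Fin p) (Fin n) ℂ)

lemma L1 (r : ℕ) :
    (∃ G0 : Matrix (Fin m) (Fin p) ℂ, (E + B * G0 * C).rank = r) ↔
    (∃ h : (Fin n → ℂ) →ₗ[ℂ] (Fin n → ℂ), range h ≤ range B.mulVecLin ∧
      ker C.mulVecLin ≤ ker h ∧ finrank ℂ (range (E.mulVecLin + h)) = r) := by
  constructor
  · rintro ⟨G0, rfl⟩
    refine ⟨(B * G0 * C).mulVecLin, ?_, ?_, ?_⟩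
    · rw [Matrix.mulVecLin_mul, Matrix.mulVecLin_mul]
      rintro _ ⟨x, rfl⟩
      exact ⟨_, rfl⟩
    · rw [Matrix.mulVecLin_mul]
      intro x hx
      rw [LinearMap.mem_ker, LinearMap.comp_apply, LinearMap.mem_ker.mp hx, _root_.map_zero]
    · rw [Matrix.rank, Matrix.mulVecLin_add]
  · rintro ⟨h, h1, h2, rfl⟩
    obtain ⟨g, hg⟩ := factor_through B.mulVecLin C.mulVecLin h h1 h2
    refine ⟨LinearMap.toMatrix' g, ?_⟩
    have hmv : (LinearMap.toMatrix' g).mulVecLin = g :=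
      LinearMap.ext fun v => by
        rw [Matrix.mulVecLin_apply, ← Matrix.toLin'_apply, Matrix.toLin'_toMatrix']
    rw [Matrix.rank, Matrix.mulVecLin_add, Matrix.mulVecLin_mul, Matrix.mulVecLin_mul, hmv,
      LinearMap.comp_assoc, hg]

lemma L2 : (Matrix.fromCols E B).rank =
    finrank ℂ (range E.mulVecLin ⊔ range B.mulVecLin :
      Submodule ℂ (Fin n → ℂ)) := by
  rw [Matrix.rank]
  have hr : range (Matrix.fromCols E B).mulVecLin =
      (range E.mulVecLin ⊔ range B.mulVecLin : Submodule ℂ (Fin n → ℂ)) := by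
    apply le_antisymm
    · rintro _ ⟨v, rfl⟩
      rw [Matrix.mulVecLin_apply, ← Sum.elim_comp_inl_inr v, Matrix.fromCols_mulVec_sumElim]
      exact Submodule.add_mem _ (Submodule.mem_sup_left ⟨v ∘ Sum.inl, rfl⟩)
        (Submodule.mem_sup_right ⟨v ∘ Sum.inr, rfl⟩)
    · apply sup_le
      · rintro _ ⟨x, rfl⟩
        refine ⟨Sum.elim x 0, ?_⟩
        rw [Matrix.mulVecLin_apply, Matrix.fromCols_mulVec_sumElim]
        simp [Matrix.mulVecLin_apply]
      · rintro _ ⟨y, rfl⟩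
        refine ⟨Sum.elim 0 y, ?_⟩
        rw [Matrix.mulVecLin_apply, Matrix.fromCols_mulVec_sumElim]
        simp [Matrix.mulVecLin_apply]
  rw [hr]

lemma L3 : (Matrix.fromRows E C).rank +
    finrank ℂ (ker E.mulVecLin ⊓ ker C.mulVecLin : Submodule ℂ (Fin n → ℂ)) = n := by
  have h1 := LinearMap.finrank_range_add_finrank_ker (Matrix.fromRows E C).mulVecLin
  have h2 : ker (Matrix.fromRows E C).mulVecLin = ker E.mulVecLin ⊓ ker C.mulVecLin := by
    ext x
    simp only [LinearMap.mem_ker, Submodule.mem_inf, Matrix.mulVecLin_apply]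
    constructor
    · intro hx
      constructor
      · ext i; have := congrFun hx (Sum.inl i); rwa [Matrix.fromRows_mulVec] at this
      · ext i; have := congrFun hx (Sum.inr i); rwa [Matrix.fromRows_mulVec] at this
    · rintro ⟨ha, hb⟩
      rw [Matrix.fromRows_mulVec, ha, hb]
      ext (i | i) <;> rfl
  rw [h2] at h1
  rw [Matrix.rank, h1]
  simp [Module.finrank_pi]
end bridge
section bridge2
open Matrix
variable {n m p : ℕ} (E : Matrix (Fin n) (Fin n) ℂ) (B : Matrix (Fin n) (Fin m) ℂ)
  (C : Matrix (Fin p) (Fin n) ℂ)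

lemma L4 : (Matrix.fromBlocks E B C 0).rank +
      finrank ℂ (ker C.mulVecLin ⊓ Submodule.comap E.mulVecLin (range B.mulVecLin) :
        Submodule ℂ (Fin n → ℂ)) =
    n + finrank ℂ (range B.mulVecLin) := by
  set M := (Matrix.fromBlocks E B C (0 : Matrix (Fin p) (Fin m) ℂ)).mulVecLin with hM
  set φ : (Fin n ⊕ Fin m → ℂ) →ₗ[ℂ] (Fin n → ℂ) := LinearMap.funLeft ℂ ℂ Sum.inl with hφ
  set ψ : (Fin n ⊕ Fin m → ℂ) →ₗ[ℂ] (Fin m → ℂ) := LinearMap.funLeft ℂ ℂ Sum.inr with hψ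
  have memker : ∀ v, v ∈ ker M ↔
      (C.mulVecLin (v ∘ Sum.inl) = 0 ∧
        E.mulVecLin (v ∘ Sum.inl) + B.mulVecLin (v ∘ Sum.inr) = 0) := by
    intro v
    rw [LinearMap.mem_ker, hM, Matrix.mulVecLin_apply, Matrix.fromBlocks_mulVec]
    simp only [Matrix.mulVecLin_apply, Matrix.zero_mulVec, add_zero]
    constructor
    · intro hv
      constructor
      · ext i; exact congrFun hv (Sum.inr i)
      · ext i; exact congrFun hv (Sum.inl i)
    · rintro ⟨h1, h2⟩
      ext (i | i)
      · exact congrFun h2 i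
      · exact congrFun h1 i
  -- rank-nullity for M
  have hrn : (Matrix.fromBlocks E B C (0 : Matrix (Fin p) (Fin m) ℂ)).rank +
      finrank ℂ (ker M) = n + m := by
    have h1 := LinearMap.finrank_range_add_finrank_ker M
    rw [Matrix.rank]
    rw [show finrank ℂ (Fin n ⊕ Fin m → ℂ) = n + m by
      simp [Module.finrank_pi]] at h1
    exact h1
  -- split ker M via φ
  have hsplit := finrank_eq_map_add_inf_ker φ (ker M)
  have hmap : (ker M).map φ =
      (ker C.mulVecLin ⊓ Submodule.comap E.mulVecLin (range B.mulVecLin) :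
        Submodule ℂ (Fin n → ℂ)) := by
    apply le_antisymm
    · rintro _ ⟨v, hv, rfl⟩
      rw [SetLike.mem_coe, memker] at hv
      rw [Submodule.mem_inf]
      refine ⟨hv.1, ?_⟩
      have := hv.2
      rw [Submodule.mem_comap]
      refine ⟨-(v ∘ Sum.inr), ?_⟩
      rw [_root_.map_neg]
      have h2 := hv.2
      have : E.mulVecLin (v ∘ Sum.inl) = -(B.mulVecLin (v ∘ Sum.inr)) := by
        rw [eq_neg_iff_add_eq_zero]; exact h2
      show -B.mulVecLin (v ∘ Sum.inr) = E.mulVecLin (v ∘ Sum.inl)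
      rw [this]
    · rintro x ⟨hx1, hx2⟩
      rw [SetLike.mem_coe, Submodule.mem_comap] at hx2
      obtain ⟨y, hy⟩ := hx2
      refine ⟨Sum.elim x (-y), ?_, ?_⟩
      · rw [SetLike.mem_coe, memker]
        constructor
        · simpa using hx1
        · simp only [Sum.elim_comp_inl, Sum.elim_comp_inr, _root_.map_neg]
          rw [hy]
          simp
      · rfl
  -- the second piece: ker M ⊓ ker φ has finrank = finrank (ker B.mulVecLin)
  have hsecond : finrank ℂ (ker M ⊓ ker φ : Submodule ℂ (Fin n ⊕ Fin m → ℂ)) =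
      finrank ℂ (ker B.mulVecLin) := by
    have h := finrank_eq_map_add_inf_ker ψ (ker M ⊓ ker φ)
    have hbot : (ker M ⊓ ker φ : Submodule ℂ (Fin n ⊕ Fin m → ℂ)) ⊓ ker ψ = ⊥ := by
      rw [eq_bot_iff]
      rintro v ⟨⟨-, hv2⟩, hv3⟩
      have h2 : v ∘ Sum.inl = 0 := hv2
      have h3 : v ∘ Sum.inr = 0 := hv3
      rw [Submodule.mem_bot]
      ext (i | i)
      · exact congrFun h2 i
      · exact congrFun h3 i
    have hmap2 : (ker M ⊓ ker φ : Submodule ℂ (Fin n ⊕ Fin m → ℂ)).map ψ = ker B.mulVecLin := by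
      apply le_antisymm
      · rintro _ ⟨v, hv, rfl⟩
        obtain ⟨hv1, hv2⟩ := hv
        rw [SetLike.mem_coe, memker] at hv1
        have h2 : v ∘ Sum.inl = 0 := hv2
        have := hv1.2
        rw [h2, _root_.map_zero, zero_add] at this
        exact this
      · intro y hy
        refine ⟨Sum.elim 0 y, ⟨?_, ?_⟩, ?_⟩
        · rw [SetLike.mem_coe, memker]
          constructor
          · simp
          · simp only [Sum.elim_comp_inl, Sum.elim_comp_inr, _root_.map_zero, zero_add]
            exact hy
        · show Sum.elim (0 : Fin n → ℂ) y ∘ Sum.inl = 0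
          rfl
        · rfl
    rw [hbot, hmap2] at h
    simpa using h
  -- rank-nullity for B
  have hB := LinearMap.finrank_range_add_finrank_ker B.mulVecLin
  rw [show finrank ℂ (Fin m → ℂ) = m by simp [Module.finrank_pi]] at hB
  rw [hmap, hsecond] at hsplit
  omega
end bridge2

open Matrix in
/-- Rank assignability by output feedback: there exists G0 with rank(E + B G0 C) = r iff
rank[E,B] + rank[E;C] − rank[[E,B],[C,0]] ≤ r ≤ min{rank[E,B], rank[E;C]}. -/
theorem stmt_6 {n m p : ℕ}
    (E : Matrix (Fin n) (Fin n) ℂ) (B : Matrix (Fin n) (Fin m) ℂ)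
    (C : Matrix (Fin p) (Fin n) ℂ) (r : ℕ) :
    (∃ G0 : Matrix (Fin m) (Fin p) ℂ, (E + B * G0 * C).rank = r) ↔
    ((Matrix.fromCols E B).rank + (Matrix.fromRows E C).rank -
        (Matrix.fromBlocks E B C 0).rank ≤ r ∧
      r ≤ min (Matrix.fromCols E B).rank (Matrix.fromRows E C).rank) := by
  rw [L1, core_iff]
  have l2 := L2 E B
  have l3 := L3 E C
  have l4 := L4 E B C
  have hN : finrank ℂ (Fin n → ℂ) = n := by simp [Module.finrank_pi]
  rw [le_min_iff, hN, ← l2]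
  omega
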